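/- Let P ⊂ ℝ^d be a reflexive lattice polytope and let S be a linear subspace of ℝ^d. If Q := P ∩ S is a lattice polytope, then Q is reflexive (as a polytope in the lattice S ∩ ℤ^d), i.e., the only lattice point in the relative interior of Q is the origin, and for every positive integer k, the lattice points in the relative interior of (k+1)Q are exactly the lattice points in kQ. -/

import Mathlib

open scoped Pointwise
/-- A point of `ℝ^d` is a lattice point if all its coordinates are integers. -/
def IsLatticePt {d : ℕ} (x : Fin d → ℝ) : Prop := ∀ i, ∃ z : ℤ, x i = (z : ℝ)

open Set

/-- Relative interior of the section of a convex body containing `0` in its interior. -/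
lemma relint_inter {d : ℕ} {P : Set (Fin d → ℝ)} (hP : Convex ℝ P) (h0 : 0 ∈ interior P)
    (S : Submodule ℝ (Fin d → ℝ)) :
    intrinsicInterior ℝ (P ∩ (S : Set (Fin d → ℝ))) = interior P ∩ (S : Set (Fin d → ℝ)) := by
  set Q : Set (Fin d → ℝ) := P ∩ (S : Set (Fin d → ℝ)) with hQdef
  have h0Q : (0 : Fin d → ℝ) ∈ Q := ⟨interior_subset h0, S.zero_mem⟩
  -- the affine span of Q is S
  have hA : affineSpan ℝ Q = S.toAffineSubspace := by
    apply le_antisymm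
    · exact affineSpan_le.2 (fun z hz => hz.2)
    · intro x hx
      have hxS : x ∈ S := hx
      -- find ε > 0 with ε • x ∈ interior P
      have hcont : Continuous fun t : ℝ => t • x := continuous_id.smul continuous_const
      have hmem : (fun t : ℝ => t • x) ⁻¹' interior P ∈ nhds (0 : ℝ) := by
        apply hcont.continuousAt.preimage_mem_nhds
        simpa using isOpen_interior.mem_nhds h0
      obtain ⟨ε, hε, hball⟩ := Metric.mem_nhds_iff.1 hmem
      have hhalf : (ε / 2 : ℝ) ∈ Metric.ball (0 : ℝ) ε := by
        rw [Metric.mem_ball, dist_zero_right, Real.norm_eq_abs, abs_of_pos (half_pos hε)]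
        exact half_lt_self hε
      have hεx : (ε / 2) • x ∈ interior P := hball hhalf
      have hεxQ : (ε / 2) • x ∈ Q := ⟨interior_subset hεx, S.smul_mem _ hxS⟩
      have h1 : (ε / 2) • x ∈ affineSpan ℝ Q := mem_affineSpan ℝ hεxQ
      have h2 : (0 : Fin d → ℝ) ∈ affineSpan ℝ Q := mem_affineSpan ℝ h0Q
      have h3 := (affineSpan ℝ Q).smul_vsub_vadd_mem (ε / 2)⁻¹ h1 h2 h2
      have hne : (ε / 2 : ℝ) ≠ 0 := (half_pos hε).ne'
      have heq : (ε / 2)⁻¹ • ((ε / 2) • x -ᵥ (0 : Fin d → ℝ)) +ᵥ (0 : Fin d → ℝ) = x := by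
        rw [vsub_eq_sub, sub_zero, vadd_eq_add, add_zero, smul_smul, inv_mul_cancel₀ hne, one_smul]
      rw [heq] at h3
      exact h3
  have hAset : ((affineSpan ℝ Q : AffineSubspace ℝ (Fin d → ℝ)) : Set (Fin d → ℝ))
      = (S : Set (Fin d → ℝ)) := by rw [hA]; rfl
  have hmemiff : ∀ w : Fin d → ℝ, w ∈ affineSpan ℝ Q ↔ w ∈ S := by
    intro w; rw [hA]; exact Iff.rfl
  ext x
  constructor
  · rintro hx
    obtain ⟨y, hy, rfl⟩ := mem_intrinsicInterior.1 hx
    have hyQ' : y ∈ ((↑) ⁻¹' Q : Set (affineSpan ℝ Q)) := interior_subset hy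
    have hyQ : (y : Fin d → ℝ) ∈ Q := hyQ'
    have hyS : (y : Fin d → ℝ) ∈ S := hyQ.2
    refine ⟨?_, hyS⟩
    -- build the path t ↦ t • y inside the affine span
    have hmemA : ∀ t : ℝ, t • (y : Fin d → ℝ) ∈ affineSpan ℝ Q := by
      intro t
      exact (hmemiff _).2 (S.smul_mem t hyS)
    set g : ℝ → affineSpan ℝ Q := fun t => ⟨t • (y : Fin d → ℝ), hmemA t⟩ with hg
    have hgc : Continuous g :=
      Continuous.subtype_mk (continuous_id.smul continuous_const) _
    have hg1 : g 1 = y := by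
      apply Subtype.ext
      simp [hg]
    have hnh : g ⁻¹' interior ((↑) ⁻¹' Q : Set (affineSpan ℝ Q)) ∈ nhds (1 : ℝ) := by
      apply hgc.continuousAt.preimage_mem_nhds
      rw [hg1]
      exact isOpen_interior.mem_nhds hy
    obtain ⟨ε, hε, hball⟩ := Metric.mem_nhds_iff.1 hnh
    set δ : ℝ := ε / 2 with hδ
    have hδpos : 0 < δ := half_pos hε
    have h1δ : (1 + δ : ℝ) ∈ Metric.ball (1 : ℝ) ε := by
      simp [Real.dist_eq, abs_of_pos hδpos, half_lt_self hε]; linarith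
    have hgi : g (1 + δ) ∈ interior ((↑) ⁻¹' Q : Set (affineSpan ℝ Q)) := hball h1δ
    have hzQ' : g (1 + δ) ∈ ((↑) ⁻¹' Q : Set (affineSpan ℝ Q)) := interior_subset hgi
    have hzQ : (1 + δ) • (y : Fin d → ℝ) ∈ Q := hzQ'
    have hzP : (1 + δ) • (y : Fin d → ℝ) ∈ P := hzQ.1
    -- x = y lies on the open segment from 0 to (1+δ) • y
    have hne : (1 + δ : ℝ) ≠ 0 := by positivity
    have hseg : (y : Fin d → ℝ) ∈ openSegment ℝ (0 : Fin d → ℝ) ((1 + δ) • (y : Fin d → ℝ)) := by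
      refine ⟨δ / (1 + δ), 1 / (1 + δ), by positivity, by positivity, ?_, ?_⟩
      · rw [← add_div, add_comm δ 1, div_self hne]
      rw [smul_zero, zero_add, smul_smul]
      rw [show (1 / (1 + δ)) * (1 + δ) = 1 by field_simp, one_smul]
    exact hP.openSegment_interior_self_subset_interior h0 hzP hseg
  · rintro ⟨hxi, hxS⟩
    have hxA : x ∈ affineSpan ℝ Q := (hmemiff _).2 hxS
    refine mem_intrinsicInterior.2 ⟨⟨x, hxA⟩, ?_, rfl⟩
    have hopen : IsOpen ((↑) ⁻¹' interior P : Set (affineSpan ℝ Q)) :=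
      isOpen_interior.preimage continuous_subtype_val
    have hsub : ((↑) ⁻¹' interior P : Set (affineSpan ℝ Q)) ⊆ (↑) ⁻¹' Q := by
      intro z hz
      have hzS : (z : Fin d → ℝ) ∈ S := (hmemiff _).1 z.2
      exact ⟨interior_subset hz, hzS⟩
    exact interior_maximal hsub hopen hxi

/-- If `P ⊂ ℝ^d` is a reflexive lattice polytope, `S` a linear subspace and
`Q = P ∩ S` is a lattice polytope, then `Q` is reflexive: the only lattice
point in the relative interior of `Q` is the origin, and for every `k > 0` the
lattice points in the relative interior of `(k+1)Q` are exactly the lattice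
points of `kQ`. -/
theorem reflexive_section (d : ℕ) (P : Set (Fin d → ℝ))
    (V : Finset (Fin d → ℝ)) (hV : ∀ v ∈ V, IsLatticePt v)
    (hPV : P = convexHull ℝ (V : Set (Fin d → ℝ)))
    (hrefl1 : interior P ∩ {x | IsLatticePt x} = {0})
    (hrefl2 : ∀ k : ℕ, 0 < k →
      interior (((k : ℝ) + 1) • P) ∩ {x | IsLatticePt x} = ((k : ℝ) • P) ∩ {x | IsLatticePt x})
    (S : Submodule ℝ (Fin d → ℝ)) (Q : Set (Fin d → ℝ)) (hQ : Q = P ∩ (S : Set (Fin d → ℝ)))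
    (W : Finset (Fin d → ℝ)) (hW : ∀ v ∈ W, IsLatticePt v)
    (hQW : Q = convexHull ℝ (W : Set (Fin d → ℝ))) :
    intrinsicInterior ℝ Q ∩ {x | IsLatticePt x} = {0} ∧
      ∀ k : ℕ, 0 < k →
        intrinsicInterior ℝ (((k : ℝ) + 1) • Q) ∩ {x | IsLatticePt x} =
          ((k : ℝ) • Q) ∩ {x | IsLatticePt x} := by
  have hP : Convex ℝ P := hPV ▸ convex_convexHull ℝ _
  have h0L : IsLatticePt (0 : Fin d → ℝ) := fun i => ⟨0, by simp⟩
  have h0 : (0 : Fin d → ℝ) ∈ interior P := by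
    have h : (0 : Fin d → ℝ) ∈ interior P ∩ {x | IsLatticePt x} := by
      rw [hrefl1]; rfl
    exact h.1
  have hSsmul : ∀ c : ℝ, c ≠ 0 → c • (S : Set (Fin d → ℝ)) = (S : Set (Fin d → ℝ)) := by
    intro c hc
    ext z
    rw [mem_smul_set_iff_inv_smul_mem₀ hc]
    constructor
    · intro h
      have := S.smul_mem c h
      simpa [smul_smul, mul_inv_cancel₀ hc] using this
    · intro h
      exact S.smul_mem c⁻¹ h
  constructor
  · rw [hQ, relint_inter hP h0 S, inter_right_comm, hrefl1,
      inter_eq_self_of_subset_left (singleton_subset_iff.2 S.zero_mem)]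
  · intro k hk
    have hc : ((k : ℝ) + 1) ≠ 0 := by positivity
    have hck : (k : ℝ) ≠ 0 := Nat.cast_ne_zero.2 hk.ne'
    have hQ1 : ((k : ℝ) + 1) • Q = (((k : ℝ) + 1) • P) ∩ (S : Set (Fin d → ℝ)) := by
      rw [hQ, smul_set_inter₀ hc, hSsmul _ hc]
    have hQ2 : (k : ℝ) • Q = ((k : ℝ) • P) ∩ (S : Set (Fin d → ℝ)) := by
      rw [hQ, smul_set_inter₀ hck, hSsmul _ hck]
    have hP' : Convex ℝ (((k : ℝ) + 1) • P) := hP.smul _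
    have h0' : (0 : Fin d → ℝ) ∈ interior (((k : ℝ) + 1) • P) := by
      rw [interior_smul₀ hc]
      exact ⟨0, h0, smul_zero _⟩
    rw [hQ1, relint_inter hP' h0' S, inter_right_comm, hrefl2 k hk, hQ2, inter_right_comm]
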